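/- For every integer n ≥ 1 and every unit vector t = (cos θ, sin θ) in the plane, the sum over k = 0, …, n−1 of |t · ν_k|, where ν_k = (cos(πk/n), sin(πk/n)), equals 2n/π + O(1/n), with the implied constant absolute (uniform in θ and n). Concretely: there is an absolute constant C such that for all n ≥ 1 and all θ, |Σ_{k=0}^{n−1} |cos(θ − πk/n)| − 2n/π| ≤ C/n. -/

import Mathlib

open Real Finset

/-- The sine-sum is periodic with period `π/n`. -/
lemma aux_periodic (n : ℕ) (hn : 1 ≤ n) :
    Function.Periodic (fun y : ℝ => ∑ k ∈ Finset.range n, |Real.sin (y + Real.pi * k / n)|)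
      (Real.pi / n) := by
  have hnR : (n : ℝ) ≠ 0 := by positivity
  intro y
  have h1 : ∀ k : ℕ, |Real.sin (y + Real.pi / n + Real.pi * k / n)|
      = |Real.sin (y + Real.pi * (k + 1 : ℕ) / n)| := by
    intro k
    congr 2
    push_cast
    field_simp
    ring
  simp only [h1]
  have h2 : (∑ k ∈ Finset.range n, |Real.sin (y + Real.pi * (k + 1 : ℕ) / n)|)
      = (∑ k ∈ Finset.range (n + 1), |Real.sin (y + Real.pi * k / n)|)
        - |Real.sin (y + Real.pi * (0 : ℕ) / n)| := by
    rw [Finset.sum_range_succ' (fun k : ℕ => |Real.sin (y + Real.pi * k / n)|) n]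
    ring
  rw [h2, Finset.sum_range_succ]
  have h3 : (y + Real.pi * (n : ℕ) / n) = (y + Real.pi * (0:ℕ) / n) + Real.pi := by
    push_cast
    field_simp
    ring
  rw [h3, Real.sin_add_pi, abs_neg]
  ring

/-- Closed form for the sine-sum on the fundamental domain. -/
lemma aux_closed_form (n : ℕ) (hn : 1 ≤ n) (y : ℝ) (hy : y ∈ Set.Ico 0 (Real.pi / n)) :
    (∑ k ∈ Finset.range n, |Real.sin (y + Real.pi * k / n)|) * Real.sin (Real.pi / (2 * n))
      = Real.cos (y - Real.pi / (2 * n)) := by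
  have hnR : (0:ℝ) < n := by exact_mod_cast Nat.pos_of_ne_zero (by omega)
  have hnR' : (n : ℝ) ≠ 0 := ne_of_gt hnR
  -- drop the absolute values
  have habs : ∀ k ∈ Finset.range n, |Real.sin (y + Real.pi * k / n)| = Real.sin (y + Real.pi * k / n) := by
    intro k hk
    rw [Finset.mem_range] at hk
    apply abs_of_nonneg
    apply Real.sin_nonneg_of_nonneg_of_le_pi
    · have : (0:ℝ) ≤ Real.pi * k / n := by positivity
      linarith [hy.1]
    · have hk' : (k : ℝ) ≤ (n : ℝ) - 1 := by
        have : (k : ℝ) + 1 ≤ n := by exact_mod_cast hk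
        linarith
      have hy2 : y ≤ Real.pi / n := le_of_lt hy.2
      have : Real.pi * k / n ≤ Real.pi * ((n:ℝ) - 1) / n := by
        gcongr
      calc y + Real.pi * k / n ≤ Real.pi / n + Real.pi * ((n:ℝ)-1)/n := by linarith
        _ = Real.pi := by field_simp; ring
  rw [Finset.sum_congr rfl habs]
  -- telescoping
  have hterm : ∀ k : ℕ,
      Real.cos (y + Real.pi * k / n - Real.pi / (2 * n))
        - Real.cos (y + Real.pi * (k + 1 : ℕ) / n - Real.pi / (2 * n))
      = 2 * Real.sin (y + Real.pi * k / n) * Real.sin (Real.pi / (2 * n)) := by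
    intro k
    rw [Real.cos_sub_cos]
    push_cast
    have e1 : (y + Real.pi * k / n - Real.pi / (2 * n) + (y + Real.pi * (k+1) / n - Real.pi / (2 * n))) / 2
        = y + Real.pi * k / n := by field_simp; ring
    have e2 : (y + Real.pi * k / n - Real.pi / (2 * n) - (y + Real.pi * (k+1) / n - Real.pi / (2 * n))) / 2
        = -(Real.pi / (2 * n)) := by field_simp; ring
    rw [e1, e2, Real.sin_neg]
    ring
  have htel := Finset.sum_range_sub'
    (fun k : ℕ => Real.cos (y + Real.pi * k / n - Real.pi / (2 * n))) n
  simp only [hterm] at htel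
  have hsum : (∑ k ∈ Finset.range n, Real.sin (y + Real.pi * k / n)) * (2 * Real.sin (Real.pi / (2 * n)))
      = Real.cos (y + Real.pi * (0:ℕ) / n - Real.pi / (2 * n))
        - Real.cos (y + Real.pi * (n:ℕ) / n - Real.pi / (2 * n)) := by
    rw [← htel, Finset.sum_mul]
    apply Finset.sum_congr rfl
    intro k _
    ring
  have h0 : y + Real.pi * (0:ℕ) / n - Real.pi / (2 * n) = y - Real.pi / (2 * n) := by
    push_cast; ring
  have hnn : y + Real.pi * (n:ℕ) / n - Real.pi / (2 * n)
      = (y - Real.pi / (2 * n)) + Real.pi := by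
    field_simp
    ring
  rw [h0, hnn, Real.cos_add_pi] at hsum
  nlinarith [hsum]

theorem angular_quadrature :
    ∃ C : ℝ, 0 < C ∧ ∀ n : ℕ, 1 ≤ n → ∀ θ : ℝ,
      |(∑ k ∈ Finset.range n, |Real.cos (θ - Real.pi * k / n)|) - 2 * n / Real.pi|
        ≤ C / n := by
  refine ⟨2, by norm_num, ?_⟩
  intro n hn θ
  have hnR : (0:ℝ) < n := by exact_mod_cast Nat.pos_of_ne_zero (by omega)
  have hnR' : (n : ℝ) ≠ 0 := ne_of_gt hnR
  have hπ := Real.pi_pos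
  -- rewrite as sine sum
  have hcs : (∑ k ∈ Finset.range n, |Real.cos (θ - Real.pi * k / n)|)
      = ∑ k ∈ Finset.range n, |Real.sin ((Real.pi / 2 - θ) + Real.pi * k / n)| := by
    apply Finset.sum_congr rfl
    intro k _
    congr 1
    rw [← Real.sin_pi_div_two_sub]
    congr 1
    ring
  rw [hcs]
  obtain ⟨y, hy, hEq⟩ := (aux_periodic n hn).exists_mem_Ico₀ (by positivity) (Real.pi / 2 - θ)
  rw [hEq]
  have hcf := aux_closed_form n hn y hy
  set u : ℝ := Real.pi / (2 * n) with hu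
  have hu0 : 0 < u := by positivity
  have h1n : (1:ℝ) ≤ n := by exact_mod_cast hn
  have huπ : u ≤ Real.pi / 2 := by
    rw [hu, div_le_div_iff₀ (by positivity) (by norm_num)]
    nlinarith
  have hsinu : 0 < Real.sin u := Real.sin_pos_of_pos_of_lt_pi hu0 (by linarith)
  -- the sum equals cos(y-u)/sin u
  have hS : (∑ k ∈ Finset.range n, |Real.sin (y + Real.pi * k / n)|)
      = Real.cos (y - u) / Real.sin u := by
    rw [eq_div_iff (ne_of_gt hsinu)]
    exact hcf
  rw [hS]
  -- cos(y-u) ∈ [cos u, 1]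
  have hyu : |y - u| ≤ u := by
    have h2u : Real.pi / n = 2 * u := by rw [hu]; field_simp
    rw [abs_le]
    constructor
    · linarith [hy.1]
    · have := hy.2; rw [h2u] at this; linarith
  have hcos_ge : Real.cos u ≤ Real.cos (y - u) := by
    rw [← Real.cos_abs (y - u)]
    exact Real.cos_le_cos_of_nonneg_of_le_pi (abs_nonneg _) (by linarith) hyu
  have hcos_le : Real.cos (y - u) ≤ 1 := Real.cos_le_one _
  -- 2n/π = 1/u
  have hinv : 2 * (n:ℝ) / Real.pi = 1 / u := by
    rw [hu]; field_simp
  rw [hinv]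
  -- key bounds
  have hsin_le : Real.sin u ≤ u := Real.sin_le hu0.le
  rcases Nat.lt_or_ge n 2 with h2 | h2
  · -- n = 1 : u = π/2, sin u = 1, cos u = 0
    interval_cases n
    have hu' : u = Real.pi / 2 := by rw [hu]; norm_num
    rw [hu'] at hcos_ge hcos_le ⊢
    rw [Real.sin_pi_div_two, Real.cos_pi_div_two] at *
    have h1 : (1:ℝ)/(Real.pi/2) = 2/Real.pi := by field_simp
    rw [h1]
    have h2π : 2 / Real.pi ≤ 1 := by
      rw [div_le_one hπ]; linarith [Real.two_le_pi]
    have h2π' : 0 < 2 / Real.pi := by positivity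
    rw [abs_le]
    push_cast
    constructor <;> simp <;> nlinarith
  · -- n ≥ 2 : u ≤ π/4 < 1
    have hu1 : u ≤ 1 := by
      have : (2:ℝ) ≤ n := by exact_mod_cast h2
      rw [hu, div_le_one (by positivity)]
      linarith [Real.pi_le_four]
    have hsin_gt : u - u ^ 3 / 4 < Real.sin u := by
      have := Real.sin_gt_sub_cube hu0
      linarith [pow_pos hu0 3]
    have hcosu : 1 - u ^ 2 / 2 ≤ Real.cos u := Real.one_sub_sq_div_two_le_cos
    have h34 : (3/4) * u ≤ Real.sin u := by nlinarith [hsin_gt, hu0, hu1, sq_nonneg u]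
    have hB : u * u * ((3/4) * u) ≤ u * u * Real.sin u :=
      mul_le_mul_of_nonneg_left h34 (mul_pos hu0 hu0).le
    have hub : Real.cos (y - u) / Real.sin u - 1 / u ≤ u := by
      rw [div_sub_div _ _ (ne_of_gt hsinu) (ne_of_gt hu0), div_le_iff₀ (by positivity)]
      have hA : Real.cos (y - u) * u ≤ 1 * u := mul_le_mul_of_nonneg_right hcos_le hu0.le
      nlinarith [hsin_gt, hA, hB]
    have hlb : 1 / u - Real.cos (y - u) / Real.sin u ≤ u := by
      rw [div_sub_div _ _ (ne_of_gt hu0) (ne_of_gt hsinu), div_le_iff₀ (by positivity)]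
      have hC : u * (1 - u ^ 2 / 2) ≤ u * Real.cos (y - u) :=
        mul_le_mul_of_nonneg_left (le_trans hcosu hcos_ge) hu0.le
      linarith [hsin_le, hC, hB, pow_pos hu0 3]
    have hfin : u ≤ 2 / n := by
      rw [hu, div_le_div_iff₀ (by positivity) hnR]
      have h4 := mul_le_mul_of_nonneg_right Real.pi_le_four hnR.le
      linarith
    rw [abs_le]
    constructor <;> [linarith; linarith]
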